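/- arXiv:1905.13602 — 2 statements merged into one kernel-verified Lean document; each statement's English description precedes it below -/
import Mathlib

section
/- Let k be a real number and let g : (0,∞) → ℂ be twice differentiable with g″(r) + g′(r)/r + k²·g(r) = 0 for all r > 0. Define G : ℝ∖{0} → ℂ by G(t) = g(|t|) and ω(t) = √(1−t²). Then for all x, y in (−1,1) with x ≠ y, writing F(x,y) = G(x−y), one has ω(y)·∂_y(ω(y)·∂_y F(x,y)) − ω(x)·∂_x(ω(x)·∂_x F(x,y)) = k²·(y² − x²)·G(x−y). (This kernel identity is the heart of the commutation S_{k,ω}[−(ω∂ₓ)² − k²ω²] = [−(ω∂ₓ)² − k²ω²]S_{k,ω} for the weighted Helmholtz single-layer operator.) -/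
open Real Set

private lemma omega_hasDerivAt {y : ℝ} (h1 : (0:ℝ) < 1 - y ^ 2) :
    HasDerivAt (fun s : ℝ => ((Real.sqrt (1 - s ^ 2) : ℝ) : ℂ))
      ((-y / Real.sqrt (1 - y ^ 2) : ℝ) : ℂ) y := by
  have h0 : HasDerivAt (fun s : ℝ => 1 - s ^ 2) (-(2 * y)) y := by
    simpa using ((hasDerivAt_pow 2 y).const_sub 1)
  have hsq := (Real.hasDerivAt_sqrt h1.ne').comp y h0
  have heq : 1 / (2 * Real.sqrt (1 - y ^ 2)) * -(2 * y) = -y / Real.sqrt (1 - y ^ 2) := by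
    have hw : Real.sqrt (1 - y ^ 2) ≠ 0 := Real.sqrt_ne_zero'.2 h1
    field_simp
  rw [heq] at hsq
  exact hsq.ofReal_comp

private lemma lemA (g : ℝ → ℂ) (c y : ℝ) (h1 : (0:ℝ) < 1 - y ^ 2)
    (hd : DifferentiableAt ℝ (deriv g) (y - c)) :
    (Real.sqrt (1 - y ^ 2) : ℂ) *
        deriv (fun s => (Real.sqrt (1 - s ^ 2) : ℂ) * deriv (fun t => g (t - c)) s) y
      = -(y : ℂ) * deriv g (y - c) + (1 - (y : ℂ) ^ 2) * deriv (deriv g) (y - c) := by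
  have hfun : (fun s => (Real.sqrt (1 - s ^ 2) : ℂ) * deriv (fun t => g (t - c)) s)
      = fun s => (Real.sqrt (1 - s ^ 2) : ℂ) * deriv g (s - c) := by
    funext s; rw [deriv_comp_sub_const]
  rw [hfun]
  have hg2 : HasDerivAt (fun s : ℝ => deriv g (s - c)) (deriv (deriv g) (y - c)) y :=
    hd.hasDerivAt.comp_sub_const y c
  rw [HasDerivAt.deriv (f := fun s => (Real.sqrt (1 - s ^ 2) : ℂ) * deriv g (s - c)) ((omega_hasDerivAt h1).mul hg2)]
  have hw : (Real.sqrt (1 - y ^ 2) : ℂ) ≠ 0 := by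
    exact_mod_cast (Real.sqrt_ne_zero'.2 h1)
  have hw2 : (Real.sqrt (1 - y ^ 2) : ℂ) * (Real.sqrt (1 - y ^ 2) : ℂ) = 1 - (y : ℂ) ^ 2 := by
    rw [← Complex.ofReal_mul, Real.mul_self_sqrt h1.le]; push_cast; ring
  have hc : ((-y / Real.sqrt (1 - y ^ 2) : ℝ) : ℂ) * (Real.sqrt (1 - y ^ 2) : ℂ) = -(y : ℂ) := by
    push_cast
    field_simp
  linear_combination deriv g (y - c) * hc + deriv (deriv g) (y - c) * hw2

private lemma lemB (g : ℝ → ℂ) (c y : ℝ) (h1 : (0:ℝ) < 1 - y ^ 2)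
    (hd : DifferentiableAt ℝ (deriv g) (c - y)) :
    (Real.sqrt (1 - y ^ 2) : ℂ) *
        deriv (fun s => (Real.sqrt (1 - s ^ 2) : ℂ) * deriv (fun t => g (c - t)) s) y
      = (y : ℂ) * deriv g (c - y) + (1 - (y : ℂ) ^ 2) * deriv (deriv g) (c - y) := by
  have hfun : (fun s => (Real.sqrt (1 - s ^ 2) : ℂ) * deriv (fun t => g (c - t)) s)
      = fun s => (Real.sqrt (1 - s ^ 2) : ℂ) * -deriv g (c - s) := by
    funext s; rw [deriv_comp_const_sub]
  rw [hfun]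
  have hg2 : HasDerivAt (fun s : ℝ => -deriv g (c - s)) (deriv (deriv g) (c - y)) y := by
    have := (hd.hasDerivAt.comp_const_sub c y).neg; simp only [neg_neg] at this; exact this
  rw [HasDerivAt.deriv (f := fun s => (Real.sqrt (1 - s ^ 2) : ℂ) * -deriv g (c - s)) ((omega_hasDerivAt h1).mul hg2)]
  have hw : (Real.sqrt (1 - y ^ 2) : ℂ) ≠ 0 := by
    exact_mod_cast (Real.sqrt_ne_zero'.2 h1)
  have hw2 : (Real.sqrt (1 - y ^ 2) : ℂ) * (Real.sqrt (1 - y ^ 2) : ℂ) = 1 - (y : ℂ) ^ 2 := by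
    rw [← Complex.ofReal_mul, Real.mul_self_sqrt h1.le]; push_cast; ring
  have hc : ((-y / Real.sqrt (1 - y ^ 2) : ℝ) : ℂ) * (Real.sqrt (1 - y ^ 2) : ℂ) = -(y : ℂ) := by
    push_cast
    field_simp
  linear_combination (-deriv g (c - y)) * hc + deriv (deriv g) (c - y) * hw2

/-- The heart of the commutation `S_{k,ω} [-(ω∂ₓ)² - k²ω²] = [-(ω∂ₓ)² - k²ω²] S_{k,ω}`:
for `G(t) = g(|t|)` with `g` a radial solution of the 2D Helmholtz equation, the
commutator kernel `(ω_y ∂_y)² G(x-y) - (ω_x ∂_x)² G(x-y)` equals `k²(y²-x²) G(x-y)`. -/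
theorem helmholtz_commutator_kernel_identity (k : ℝ) (g : ℝ → ℂ)
    (hg : ∀ r ∈ Ioi (0 : ℝ), DifferentiableAt ℝ g r)
    (hg' : ∀ r ∈ Ioi (0 : ℝ), DifferentiableAt ℝ (deriv g) r)
    (hbessel : ∀ r ∈ Ioi (0 : ℝ),
      deriv (deriv g) r + deriv g r / (r : ℂ) + (k : ℂ) ^ 2 * g r = 0) :
    ∀ x ∈ Ioo (-1 : ℝ) 1, ∀ y ∈ Ioo (-1 : ℝ) 1, x ≠ y →
      (Real.sqrt (1 - y ^ 2) : ℂ) *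
          deriv (fun s => (Real.sqrt (1 - s ^ 2) : ℂ) *
            deriv (fun t => g |x - t|) s) y
        - (Real.sqrt (1 - x ^ 2) : ℂ) *
          deriv (fun s => (Real.sqrt (1 - s ^ 2) : ℂ) *
            deriv (fun t => g |t - y|) s) x
      = (k : ℂ) ^ 2 * ((y : ℂ) ^ 2 - (x : ℂ) ^ 2) * g |x - y| := by
  intro x hx y hy hxy
  have h1x : (0:ℝ) < 1 - x ^ 2 := by nlinarith [hx.1, hx.2]
  have h1y : (0:ℝ) < 1 - y ^ 2 := by nlinarith [hy.1, hy.2]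
  rcases lt_or_gt_of_ne hxy with hlt | hgt
  · -- x < y, r = y - x
    have hr : y - x ∈ Ioi (0:ℝ) := by simp [hlt, sub_pos]
    -- first term: near y, |x - t| = t - x
    have hev1 : (fun s => (Real.sqrt (1 - s ^ 2) : ℂ) * deriv (fun t => g |x - t|) s)
        =ᶠ[nhds y] (fun s => (Real.sqrt (1 - s ^ 2) : ℂ) * deriv (fun t => g (t - x)) s) := by
      filter_upwards [Ioi_mem_nhds hlt] with s hs
      congr 1
      apply Filter.EventuallyEq.deriv_eq
      filter_upwards [Ioi_mem_nhds hs] with t ht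
      rw [abs_of_nonpos (by simp at ht ⊢; linarith), neg_sub]
    -- second term: near x, |t - y| = y - t
    have hev2 : (fun s => (Real.sqrt (1 - s ^ 2) : ℂ) * deriv (fun t => g |t - y|) s)
        =ᶠ[nhds x] (fun s => (Real.sqrt (1 - s ^ 2) : ℂ) * deriv (fun t => g (y - t)) s) := by
      filter_upwards [Iio_mem_nhds hlt] with s hs
      congr 1
      apply Filter.EventuallyEq.deriv_eq
      filter_upwards [Iio_mem_nhds hs] with t ht
      rw [abs_of_nonpos (by simp at ht ⊢; linarith), neg_sub]
    rw [hev1.deriv_eq, hev2.deriv_eq, lemA g x y h1y (hg' _ hr),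
      lemB g y x h1x (hg' _ hr), abs_of_nonpos (by linarith), neg_sub]
    have hb := hbessel (y - x) hr
    have hrne : ((y:ℂ) - (x:ℂ)) ≠ 0 := by
      intro h
      apply hxy
      have : (x:ℂ) = (y:ℂ) := by linear_combination -h
      exact_mod_cast this
    have hb' : ((y:ℂ) - (x:ℂ)) * deriv (deriv g) (y - x) + deriv g (y - x)
        + (k : ℂ) ^ 2 * ((y:ℂ) - (x:ℂ)) * g (y - x) = 0 := by
      have : ((y - x : ℝ) : ℂ) = (y:ℂ) - (x:ℂ) := by push_cast; ring
      rw [this] at hb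
      field_simp at hb
      linear_combination hb
    linear_combination (-(x:ℂ) - (y:ℂ)) * hb'
  · -- y < x, r = x - y
    have hr : x - y ∈ Ioi (0:ℝ) := by simp [hgt, sub_pos]
    have hev1 : (fun s => (Real.sqrt (1 - s ^ 2) : ℂ) * deriv (fun t => g |x - t|) s)
        =ᶠ[nhds y] (fun s => (Real.sqrt (1 - s ^ 2) : ℂ) * deriv (fun t => g (x - t)) s) := by
      filter_upwards [Iio_mem_nhds hgt] with s hs
      congr 1
      apply Filter.EventuallyEq.deriv_eq
      filter_upwards [Iio_mem_nhds hs] with t ht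
      rw [abs_of_nonneg (by simp at ht ⊢; linarith)]
    have hev2 : (fun s => (Real.sqrt (1 - s ^ 2) : ℂ) * deriv (fun t => g |t - y|) s)
        =ᶠ[nhds x] (fun s => (Real.sqrt (1 - s ^ 2) : ℂ) * deriv (fun t => g (t - y)) s) := by
      filter_upwards [Ioi_mem_nhds hgt] with s hs
      congr 1
      apply Filter.EventuallyEq.deriv_eq
      filter_upwards [Ioi_mem_nhds hs] with t ht
      rw [abs_of_nonneg (by simp at ht ⊢; linarith)]
    rw [hev1.deriv_eq, hev2.deriv_eq, lemB g x y h1y (hg' _ hr),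
      lemA g y x h1x (hg' _ hr), abs_of_nonneg (by linarith)]
    have hb := hbessel (x - y) hr
    have hrne : ((x:ℂ) - (y:ℂ)) ≠ 0 := by
      intro h
      apply hxy
      have : (x:ℂ) = (y:ℂ) := by linear_combination h
      exact_mod_cast this
    have hb' : ((x:ℂ) - (y:ℂ)) * deriv (deriv g) (x - y) + deriv g (x - y)
        + (k : ℂ) ^ 2 * ((x:ℂ) - (y:ℂ)) * g (x - y) = 0 := by
      have : ((x - y : ℝ) : ℂ) = (x:ℂ) - (y:ℂ) := by push_cast; ring
      rw [this] at hb
      field_simp at hb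
      linear_combination hb
    linear_combination ((x:ℂ) + (y:ℂ)) * hb'
end

section
/- For every natural number n, one has ln 2 ≤ 2·√(n²+1)·σₙ ≤ √2, where σ₀ = ln(2)/2 and σₙ = 1/(2n) for n ≥ 1. Consequently, for every finite Chebyshev expansion u = Σ_{n=0}^{N} cₙ·Tₙ, the function v := Σ_{n=0}^{N} 2·√(n²+1)·σₙ·cₙ·Tₙ satisfies (ln 2)²·Σ_{n=0}^{N} dₙ·cₙ² ≤ Σ_{n=0}^{N} dₙ·(2√(n²+1)·σₙ·cₙ)² ≤ 2·Σ_{n=0}^{N} dₙ·cₙ² for any nonnegative weights dₙ; in particular, measuring norms in L²_{1/ω}, the operator 2·P′₀·S_{0,ω} with P′₀ = √(−(ω∂ₓ)² + Id) satisfies ‖2·P′₀·S_{0,ω}·u‖ ≤ √2·‖u‖ and ‖u‖ ≤ (1/ln 2)·‖2·P′₀·S_{0,ω}·u‖ for all such u. -/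
open Real Set MeasureTheory intervalIntegral Finset

/-- The `n`-th Chebyshev polynomial of the first kind, as a real function. -/
noncomputable def chebT (n : ℕ) : ℝ → ℝ := fun x => (Polynomial.Chebyshev.T ℝ n).eval x

/-- The eigenvalues of the weighted Laplace single-layer operator:
`σ₀ = ln 2 / 2` and `σₙ = 1/(2n)` for `n ≥ 1`. -/
noncomputable def sigmaCheb : ℕ → ℝ := fun n =>
  if n = 0 then Real.log 2 / 2 else 1 / (2 * n)

/-- The `L²_{1/ω}` norm `‖f‖ = √((1/π) ∫ f²/√(1-x²))`. -/
noncomputable def nrmOmega (f : ℝ → ℝ) : ℝ :=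
  Real.sqrt ((1 / π) * ∫ x in (-1 : ℝ)..1, f x ^ 2 / Real.sqrt (1 - x ^ 2))


lemma integrable_inv_sqrt : IntervalIntegrable (fun x : ℝ => 1 / Real.sqrt (1 - x ^ 2)) volume (-1) 1 := by
  have hcont : ContinuousOn Real.arcsin (Icc (-1:ℝ) 1) := Real.continuous_arcsin.continuousOn
  have hderiv : ∀ x ∈ Ioo (-1:ℝ) 1, HasDerivAt Real.arcsin (1 / Real.sqrt (1 - x ^ 2)) x := by
    intro x hx
    exact Real.hasDerivAt_arcsin (ne_of_gt hx.1) (ne_of_lt hx.2)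
  have h := intervalIntegral.integrableOn_deriv_of_nonneg hcont hderiv (by
    intro x hx; positivity)
  rw [intervalIntegrable_iff_integrableOn_Ioc_of_le (by norm_num)]
  exact h

lemma integrable_div_sqrt {f : ℝ → ℝ} (hm : Measurable f)
    (hb : ∀ x ∈ Icc (-1:ℝ) 1, |f x| ≤ 1) :
    IntervalIntegrable (fun x => f x / Real.sqrt (1 - x ^ 2)) volume (-1) 1 := by
  apply integrable_inv_sqrt.mono_fun
  · exact ((hm.div (measurable_const.sub (measurable_id.pow_const 2)).sqrt)).aestronglyMeasurable
  · rw [Filter.EventuallyLE, ae_restrict_iff' measurableSet_uIoc]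
    filter_upwards with x hx
    rw [uIoc_of_le (by norm_num : (-1:ℝ) ≤ 1)] at hx
    have hx' : x ∈ Icc (-1:ℝ) 1 := ⟨hx.1.le, hx.2⟩
    have h1 : (0:ℝ) ≤ Real.sqrt (1 - x ^ 2) := Real.sqrt_nonneg _
    simp only [Real.norm_eq_abs, abs_div, abs_of_nonneg h1]
    exact div_le_div_of_nonneg_right (by simpa using hb x hx') h1

lemma measurable_cosk (k : ℤ) : Measurable (fun x : ℝ => Real.cos (k * Real.arccos x)) :=
  (Real.measurable_cos.comp (Real.measurable_arccos.const_mul _))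

lemma integrable_cosk (k : ℤ) :
    IntervalIntegrable (fun x => Real.cos (k * Real.arccos x) / Real.sqrt (1 - x ^ 2)) volume (-1) 1 :=
  integrable_div_sqrt (measurable_cosk k) (fun x _ => Real.abs_cos_le_one _)

lemma J (k : ℤ) :
    ∫ x in (-1:ℝ)..1, Real.cos (k * Real.arccos x) / Real.sqrt (1 - x ^ 2)
      = if k = 0 then π else 0 := by
  rcases eq_or_ne k 0 with hk | hk
  · subst hk
    simp only [Int.cast_zero, zero_mul, Real.cos_zero, if_true]
    have := intervalIntegral.integral_eq_sub_of_hasDeriv_right_of_le (a := (-1:ℝ)) (b := 1)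
      (f := fun x => -Real.arccos x)
      (f' := fun x => 1 / Real.sqrt (1 - x ^ 2)) (by norm_num)
      (Real.continuous_arccos.neg.continuousOn) ?_ integrable_inv_sqrt
    · rw [this]
      rw [Real.arccos_one, Real.arccos_neg_one]; ring
    · intro x hx
      have := (Real.hasDerivAt_arccos (ne_of_gt hx.1) (ne_of_lt hx.2)).neg
      rw [neg_neg] at this
      exact this.hasDerivWithinAt
  · rw [if_neg hk]
    have hk' : (k:ℝ) ≠ 0 := Int.cast_ne_zero.mpr hk
    have := intervalIntegral.integral_eq_sub_of_hasDeriv_right_of_le (a := (-1:ℝ)) (b := 1)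
      (f := fun x => -(Real.sin (k * Real.arccos x) / k))
      (f' := fun x => Real.cos (k * Real.arccos x) / Real.sqrt (1 - x ^ 2)) (by norm_num)
      (((Real.continuous_sin.comp ((continuous_const.mul Real.continuous_arccos))).div_const _).neg.continuousOn)
      ?_ (integrable_cosk k)
    · rw [this]
      rw [Real.arccos_one, Real.arccos_neg_one, mul_zero, Real.sin_zero]
      rw [show (k:ℝ) * π = (k:ℤ) * π by push_cast; ring, Real.sin_int_mul_pi]
      simp
    · intro x hx
      have h1 : HasDerivAt Real.arccos (-(1 / Real.sqrt (1 - x ^ 2))) x :=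
        Real.hasDerivAt_arccos (ne_of_gt hx.1) (ne_of_lt hx.2)
      have h2 := ((h1.const_mul (k:ℝ)).sin.div_const (k:ℝ)).neg
      have : -(Real.cos ((k:ℝ) * Real.arccos x) * ((k:ℝ) * -(1 / Real.sqrt (1 - x ^ 2))) / k)
          = Real.cos ((k:ℝ) * Real.arccos x) / Real.sqrt (1 - x ^ 2) := by
        rw [div_eq_mul_inv, div_eq_mul_inv]
        field_simp
      rw [this] at h2
      exact h2.hasDerivWithinAt

lemma chebT_eq {x : ℝ} (hx : x ∈ Icc (-1:ℝ) 1) (n : ℕ) :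
    chebT n x = Real.cos (n * Real.arccos x) := by
  have h := Polynomial.Chebyshev.T_real_cos (Real.arccos x) n
  rw [Real.cos_arccos hx.1 hx.2] at h
  simpa [chebT] using h

lemma chebT_measurable (n : ℕ) : Measurable (chebT n) :=
  (Polynomial.continuous _).measurable

lemma chebT_abs_le {x : ℝ} (hx : x ∈ Icc (-1:ℝ) 1) (n : ℕ) : |chebT n x| ≤ 1 := by
  rw [chebT_eq hx n]; exact Real.abs_cos_le_one _

lemma ortho (m n : ℕ) :
    ∫ x in (-1:ℝ)..1, chebT m x * chebT n x / Real.sqrt (1 - x ^ 2)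
      = if m = n then (if n = 0 then π else π / 2) else 0 := by
  set p : ℤ := (m : ℤ) + n with hp
  set q : ℤ := (m : ℤ) - n with hq
  have hcongr : ∀ x ∈ uIcc (-1:ℝ) 1,
      chebT m x * chebT n x / Real.sqrt (1 - x ^ 2)
        = (Real.cos ((p : ℝ) * Real.arccos x) / Real.sqrt (1 - x ^ 2)
          + Real.cos ((q : ℝ) * Real.arccos x) / Real.sqrt (1 - x ^ 2)) / 2 := by
    intro x hx
    rw [uIcc_of_le (by norm_num : (-1:ℝ) ≤ 1)] at hx
    rw [chebT_eq hx m, chebT_eq hx n]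
    have e1 : (p : ℝ) * Real.arccos x = (m : ℝ) * Real.arccos x + (n : ℝ) * Real.arccos x := by
      rw [hp]; push_cast; ring
    have e2 : (q : ℝ) * Real.arccos x = (m : ℝ) * Real.arccos x - (n : ℝ) * Real.arccos x := by
      rw [hq]; push_cast; ring
    rw [e1, e2, Real.cos_add, Real.cos_sub]
    ring
  rw [intervalIntegral.integral_congr hcongr, intervalIntegral.integral_div,
    intervalIntegral.integral_add (integrable_cosk p) (integrable_cosk q), J p, J q]
  rcases eq_or_ne m n with h | h
  · subst h
    rcases eq_or_ne m 0 with h0 | h0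
    · subst h0; norm_num [hp, hq]
    · have h1 : p ≠ 0 := by rw [hp]; positivity
      have h2 : q = 0 := by rw [hq]; ring
      simp [h0, h1, h2]
  · have h1 : q ≠ 0 := by rw [hq]; exact sub_ne_zero.mpr (by exact_mod_cast h)
    rcases eq_or_ne p 0 with h2 | h2
    · exfalso; rw [hp] at h2; omega
    · simp [h1, h2, h]

lemma integrable_pair (m n : ℕ) :
    IntervalIntegrable (fun x => chebT m x * chebT n x / Real.sqrt (1 - x ^ 2)) volume (-1) 1 := by
  apply integrable_div_sqrt ((chebT_measurable m).mul (chebT_measurable n))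
  intro x hx
  rw [Pi.mul_apply, abs_mul]
  calc |chebT m x| * |chebT n x| ≤ 1 * 1 :=
        mul_le_mul (chebT_abs_le hx m) (chebT_abs_le hx n) (abs_nonneg _) zero_le_one
    _ = 1 := mul_one 1

set_option maxHeartbeats 1000000 in
lemma normsq (N : ℕ) (c : ℕ → ℝ) :
    (1 / π) * ∫ x in (-1:ℝ)..1,
        (∑ n ∈ Finset.range (N + 1), c n * chebT n x) ^ 2 / Real.sqrt (1 - x ^ 2)
      = ∑ n ∈ Finset.range (N + 1), (if n = 0 then (1:ℝ) else 1 / 2) * c n ^ 2 := by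
  have hexp : ∀ x : ℝ,
      (∑ n ∈ Finset.range (N + 1), c n * chebT n x) ^ 2 / Real.sqrt (1 - x ^ 2)
        = ∑ m ∈ Finset.range (N + 1), ∑ n ∈ Finset.range (N + 1),
            c m * c n * (chebT m x * chebT n x / Real.sqrt (1 - x ^ 2)) := by
    intro x
    rw [sq, Finset.sum_mul_sum]
    rw [Finset.sum_div]
    apply Finset.sum_congr rfl
    intro m _
    rw [Finset.sum_div]
    apply Finset.sum_congr rfl
    intro n _
    ring
  have : (∫ x in (-1:ℝ)..1,
      (∑ n ∈ Finset.range (N + 1), c n * chebT n x) ^ 2 / Real.sqrt (1 - x ^ 2))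
      = ∑ m ∈ Finset.range (N + 1), ∑ n ∈ Finset.range (N + 1),
          c m * c n * (if m = n then (if n = 0 then π else π / 2) else 0) := by
    have hint : ∀ m, IntervalIntegrable
        (fun x => ∑ n ∈ Finset.range (N + 1),
          c m * c n * (chebT m x * chebT n x / Real.sqrt (1 - x ^ 2))) volume (-1) 1 := by
      intro m
      have h := IntervalIntegrable.sum (μ := volume) (a := (-1:ℝ)) (b := 1)
        (Finset.range (N + 1))
        (f := fun n x => c m * c n * (chebT m x * chebT n x / Real.sqrt (1 - x ^ 2)))
        (fun n _ => (integrable_pair m n).const_mul _)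
      have e : (∑ n ∈ Finset.range (N + 1),
          fun x => c m * c n * (chebT m x * chebT n x / Real.sqrt (1 - x ^ 2)))
          = fun x => ∑ n ∈ Finset.range (N + 1),
              c m * c n * (chebT m x * chebT n x / Real.sqrt (1 - x ^ 2)) := by
        funext x
        simp [Finset.sum_apply]
      exact e ▸ h
    simp_rw [hexp]
    rw [intervalIntegral.integral_finset_sum]
    · apply Finset.sum_congr rfl
      intro m _
      rw [intervalIntegral.integral_finset_sum]
      · exact Finset.sum_congr rfl fun n _ => by
          rw [intervalIntegral.integral_const_mul, ortho]
      · exact fun n _ => (integrable_pair m n).const_mul _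
    · exact fun m _ => hint m
  rw [this]
  have hdiag : ∀ m ∈ Finset.range (N + 1),
      (∑ n ∈ Finset.range (N + 1),
        c m * c n * (if m = n then (if n = 0 then π else π / 2) else 0))
      = c m ^ 2 * (if m = 0 then π else π / 2) := by
    intro m hm
    rw [Finset.sum_eq_single m]
    · rw [if_pos rfl]; ring
    · intro n _ hn; rw [if_neg (Ne.symm hn)]; ring
    · intro hm'; exact absurd hm hm'
  rw [Finset.sum_congr rfl hdiag, Finset.mul_sum]
  apply Finset.sum_congr rfl
  intro n _
  rcases eq_or_ne n 0 with h | h <;> simp [h] <;> field_simp <;> ring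

lemma one_le_sqrt_two : (1:ℝ) ≤ Real.sqrt 2 := by
  rw [show (1:ℝ) = Real.sqrt 1 by simp]
  exact Real.sqrt_le_sqrt (by norm_num)

lemma log_two_pos' : (0:ℝ) < Real.log 2 := Real.log_pos (by norm_num)

lemma lam_bounds (n : ℕ) :
    Real.log 2 ≤ 2 * Real.sqrt ((n : ℝ) ^ 2 + 1) * sigmaCheb n ∧
      2 * Real.sqrt ((n : ℝ) ^ 2 + 1) * sigmaCheb n ≤ Real.sqrt 2 := by
  rcases eq_or_ne n 0 with h | h
  · subst h
    simp only [sigmaCheb, if_pos rfl, Nat.cast_zero]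
    norm_num
    constructor
    · exact le_of_eq (by ring)
    · calc 2 * (Real.log 2 / 2) = Real.log 2 := by ring
        _ ≤ 1 := (Real.log_two_lt_d9.le.trans (by norm_num))
        _ ≤ Real.sqrt 2 := one_le_sqrt_two
  · have hn1 : 1 ≤ (n:ℝ) := by exact_mod_cast Nat.one_le_iff_ne_zero.mpr h
    have hnpos : (0:ℝ) < n := by linarith
    simp only [sigmaCheb, if_neg h]
    have hval : 2 * Real.sqrt ((n : ℝ) ^ 2 + 1) * (1 / (2 * n))
        = Real.sqrt ((n : ℝ) ^ 2 + 1) / n := by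
      field_simp
    rw [hval]
    constructor
    · have h1 : (n:ℝ) ≤ Real.sqrt ((n : ℝ) ^ 2 + 1) := by
        nlinarith [Real.sq_sqrt (show (0:ℝ) ≤ (n:ℝ)^2+1 by positivity),
          Real.sqrt_nonneg ((n:ℝ)^2+1)]
      have h2 : (1:ℝ) ≤ Real.sqrt ((n : ℝ) ^ 2 + 1) / n := by
        rw [le_div_iff₀ hnpos, one_mul]; exact h1
      calc Real.log 2 ≤ 1 := Real.log_two_lt_d9.le.trans (by norm_num)
        _ ≤ _ := h2
    · rw [div_le_iff₀ hnpos]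
      have : Real.sqrt 2 * n = Real.sqrt (2 * n^2) := by
        rw [Real.sqrt_mul (by norm_num), Real.sqrt_sq hnpos.le]
      rw [this]
      exact Real.sqrt_le_sqrt (by nlinarith)

/-- Spectral equivalence of the zero-frequency square-root preconditioner
`P₀' = √(-(ω∂ₓ)² + Id)` with the inverse of the weighted single-layer operator:
`ln 2 ≤ 2√(n²+1) σₙ ≤ √2`, the corresponding weighted-coefficient inequalities,
and the resulting norm bounds `‖2P₀'S_{0,ω}u‖ ≤ √2 ‖u‖` and
`‖u‖ ≤ (1/ln 2) ‖2P₀'S_{0,ω}u‖` for finite Chebyshev expansions `u`. -/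
theorem spectral_equivalence_P0 :
    (∀ n : ℕ, Real.log 2 ≤ 2 * Real.sqrt ((n : ℝ) ^ 2 + 1) * sigmaCheb n ∧
        2 * Real.sqrt ((n : ℝ) ^ 2 + 1) * sigmaCheb n ≤ Real.sqrt 2) ∧
    (∀ (N : ℕ) (c d : ℕ → ℝ), (∀ n, 0 ≤ d n) →
      Real.log 2 ^ 2 * ∑ n ∈ Finset.range (N + 1), d n * c n ^ 2
          ≤ ∑ n ∈ Finset.range (N + 1),
              d n * (2 * Real.sqrt ((n : ℝ) ^ 2 + 1) * sigmaCheb n * c n) ^ 2 ∧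
        ∑ n ∈ Finset.range (N + 1),
            d n * (2 * Real.sqrt ((n : ℝ) ^ 2 + 1) * sigmaCheb n * c n) ^ 2
          ≤ 2 * ∑ n ∈ Finset.range (N + 1), d n * c n ^ 2) ∧
    (∀ (N : ℕ) (c : ℕ → ℝ),
      nrmOmega (fun x => ∑ n ∈ Finset.range (N + 1),
            2 * Real.sqrt ((n : ℝ) ^ 2 + 1) * sigmaCheb n * c n * chebT n x)
          ≤ Real.sqrt 2 *
            nrmOmega (fun x => ∑ n ∈ Finset.range (N + 1), c n * chebT n x) ∧
        nrmOmega (fun x => ∑ n ∈ Finset.range (N + 1), c n * chebT n x)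
          ≤ (1 / Real.log 2) *
            nrmOmega (fun x => ∑ n ∈ Finset.range (N + 1),
              2 * Real.sqrt ((n : ℝ) ^ 2 + 1) * sigmaCheb n * c n * chebT n x)) := by
  have hlam := lam_bounds
  have hsum : ∀ (N : ℕ) (c d : ℕ → ℝ), (∀ n, 0 ≤ d n) →
      Real.log 2 ^ 2 * ∑ n ∈ Finset.range (N + 1), d n * c n ^ 2
        ≤ ∑ n ∈ Finset.range (N + 1),
            d n * (2 * Real.sqrt ((n : ℝ) ^ 2 + 1) * sigmaCheb n * c n) ^ 2 ∧
      ∑ n ∈ Finset.range (N + 1),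
          d n * (2 * Real.sqrt ((n : ℝ) ^ 2 + 1) * sigmaCheb n * c n) ^ 2
        ≤ 2 * ∑ n ∈ Finset.range (N + 1), d n * c n ^ 2 := by
    intro N c d hd
    constructor
    · rw [Finset.mul_sum]
      apply Finset.sum_le_sum
      intro n _
      have h1 := (hlam n).1
      have h2 : Real.log 2 ^ 2 ≤ (2 * Real.sqrt ((n : ℝ) ^ 2 + 1) * sigmaCheb n) ^ 2 :=
        pow_le_pow_left₀ log_two_pos'.le h1 2
      calc Real.log 2 ^ 2 * (d n * c n ^ 2)
          = d n * c n ^ 2 * Real.log 2 ^ 2 := by ring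
        _ ≤ d n * c n ^ 2 * (2 * Real.sqrt ((n : ℝ) ^ 2 + 1) * sigmaCheb n) ^ 2 :=
            mul_le_mul_of_nonneg_left h2 (mul_nonneg (hd n) (sq_nonneg _))
        _ = d n * (2 * Real.sqrt ((n : ℝ) ^ 2 + 1) * sigmaCheb n * c n) ^ 2 := by ring
    · rw [Finset.mul_sum]
      apply Finset.sum_le_sum
      intro n _
      have h0 : 0 ≤ 2 * Real.sqrt ((n : ℝ) ^ 2 + 1) * sigmaCheb n :=
        log_two_pos'.le.trans (hlam n).1
      have h2 : (2 * Real.sqrt ((n : ℝ) ^ 2 + 1) * sigmaCheb n) ^ 2 ≤ 2 := by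
        calc (2 * Real.sqrt ((n : ℝ) ^ 2 + 1) * sigmaCheb n) ^ 2
            ≤ Real.sqrt 2 ^ 2 := pow_le_pow_left₀ h0 (hlam n).2 2
          _ = 2 := Real.sq_sqrt (by norm_num)
      calc d n * (2 * Real.sqrt ((n : ℝ) ^ 2 + 1) * sigmaCheb n * c n) ^ 2
          = d n * c n ^ 2 * (2 * Real.sqrt ((n : ℝ) ^ 2 + 1) * sigmaCheb n) ^ 2 := by ring
        _ ≤ d n * c n ^ 2 * 2 := mul_le_mul_of_nonneg_left h2 (mul_nonneg (hd n) (sq_nonneg _))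
        _ = 2 * (d n * c n ^ 2) := by ring
  refine ⟨hlam, hsum, ?_⟩
  intro N c
  set w : ℕ → ℝ := fun n => if n = 0 then (1:ℝ) else 1 / 2 with hw
  have hwpos : ∀ n, 0 ≤ w n := by
    intro n; rw [hw]; dsimp only; split <;> norm_num
  set c' : ℕ → ℝ := fun n => 2 * Real.sqrt ((n : ℝ) ^ 2 + 1) * sigmaCheb n * c n with hc'
  have hS := hsum N c w hwpos
  set S1 : ℝ := ∑ n ∈ Finset.range (N + 1), w n * c n ^ 2 with hS1
  set S2 : ℝ := ∑ n ∈ Finset.range (N + 1), w n * c' n ^ 2 with hS2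
  have hS1nn : 0 ≤ S1 := Finset.sum_nonneg fun n _ => by positivity
  have hu : nrmOmega (fun x => ∑ n ∈ Finset.range (N + 1), c n * chebT n x)
      = Real.sqrt S1 := by
    rw [nrmOmega, normsq]
  have hv : nrmOmega (fun x => ∑ n ∈ Finset.range (N + 1),
      2 * Real.sqrt ((n : ℝ) ^ 2 + 1) * sigmaCheb n * c n * chebT n x)
      = Real.sqrt S2 := by
    rw [show (fun x => ∑ n ∈ Finset.range (N + 1),
        2 * Real.sqrt ((n : ℝ) ^ 2 + 1) * sigmaCheb n * c n * chebT n x)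
        = fun x => ∑ n ∈ Finset.range (N + 1), c' n * chebT n x from rfl]
    rw [nrmOmega, normsq]
  rw [hu, hv]
  constructor
  · calc Real.sqrt S2 ≤ Real.sqrt (2 * S1) := Real.sqrt_le_sqrt hS.2
      _ = Real.sqrt 2 * Real.sqrt S1 := Real.sqrt_mul (by norm_num) _
  · have h3 : Real.log 2 * Real.sqrt S1 ≤ Real.sqrt S2 := by
      have : Real.sqrt (Real.log 2 ^ 2 * S1) = Real.log 2 * Real.sqrt S1 := by
        rw [Real.sqrt_mul (sq_nonneg _), Real.sqrt_sq log_two_pos'.le]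
      rw [← this]
      exact Real.sqrt_le_sqrt hS.1
    calc Real.sqrt S1 = (1 / Real.log 2) * (Real.log 2 * Real.sqrt S1) := by
          field_simp
      _ ≤ (1 / Real.log 2) * Real.sqrt S2 :=
          mul_le_mul_of_nonneg_left h3 (by positivity)
end
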